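/- Let γ : ℝ → ℝ^D be a C² curve parametrized by arc length, i.e. ‖γ'(t)‖ = 1 for all t, and suppose there is r₀ > 0 with ‖γ''(t)‖ ≤ 1/r₀ for all t. Then for every s ≥ 0, s − s³/(24 r₀²) ≤ ‖γ(s) − γ(0)‖ ≤ s. -/

import Mathlib

open intervalIntegral
open scoped RealInnerProductSpace

/-- Proposition 1 of the paper: for a unit-speed `C²` curve `γ` in `ℝ^D` with
`‖γ''‖ ≤ 1/r₀`, the chord length satisfies `s − s³/(24 r₀²) ≤ ‖γ(s) − γ(0)‖ ≤ s`
for all `s ≥ 0`. -/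
theorem stmt_1 {D : ℕ} (γ : ℝ → EuclideanSpace ℝ (Fin D))
    (hγ : ContDiff ℝ 2 γ)
    (hunit : ∀ t : ℝ, ‖deriv γ t‖ = 1)
    (r₀ : ℝ) (hr₀ : 0 < r₀)
    (hcurv : ∀ t : ℝ, ‖deriv (deriv γ) t‖ ≤ 1 / r₀) :
    ∀ s : ℝ, 0 ≤ s →
      s - s ^ 3 / (24 * r₀ ^ 2) ≤ ‖γ s - γ 0‖ ∧ ‖γ s - γ 0‖ ≤ s := by
  have hγ' : ContDiff ℝ 1 (deriv γ) := by
    have := (contDiff_succ_iff_deriv (n := 1)).mp (by exact_mod_cast hγ)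
    exact this.2.2
  have hdγ : Differentiable ℝ γ := hγ.differentiable (by norm_num)
  have hdγ' : Differentiable ℝ (deriv γ) := hγ'.differentiable one_ne_zero
  have hcont' : Continuous (deriv γ) := hdγ'.continuous
  -- Lipschitz bound on deriv γ
  have hlip : ∀ a b : ℝ, ‖deriv γ b - deriv γ a‖ ≤ (1 / r₀) * ‖b - a‖ := by
    intro a b
    exact (convex_univ (𝕜 := ℝ)).norm_image_sub_le_of_norm_deriv_le
      (fun x _ => hdγ' x) (fun x _ => hcurv x) trivial trivial
  intro s hs
  constructor
  · -- lower bound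
    set u := deriv γ (s / 2) with hu
    have hnu : ‖u‖ = 1 := hunit _
    have hInt : IntervalIntegrable (deriv γ) MeasureTheory.volume 0 s :=
      hcont'.intervalIntegrable 0 s
    have hFTC : ∫ t in (0:ℝ)..s, deriv γ t = γ s - γ 0 :=
      integral_deriv_eq_sub (fun x _ => hdγ x) hInt
    have hinner : ⟪u, γ s - γ 0⟫ = ∫ t in (0:ℝ)..s, ⟪u, deriv γ t⟫ := by
      rw [← hFTC]
      exact ((innerSL ℝ u).intervalIntegral_comp_comm hInt).symm
    have hptwise : ∀ t : ℝ, 1 - (t - s/2)^2 / (2 * r₀^2) ≤ ⟪u, deriv γ t⟫ := by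
      intro t
      have h1 : ‖deriv γ t - u‖ ≤ |t - s/2| / r₀ := by
        have := hlip (s/2) t
        rw [Real.norm_eq_abs] at this
        calc ‖deriv γ t - u‖ ≤ (1 / r₀) * |t - s/2| := this
        _ = |t - s/2| / r₀ := by ring
      have hexp : ‖deriv γ t - u‖^2 = 2 - 2 * ⟪u, deriv γ t⟫ := by
        rw [@norm_sub_sq_real]
        have h2 : ‖deriv γ t‖ = 1 := hunit t
        rw [h2, hnu, real_inner_comm]
        ring
      have h3 : ‖deriv γ t - u‖^2 ≤ (t - s/2)^2 / r₀^2 := by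
        calc ‖deriv γ t - u‖^2 ≤ (|t - s/2| / r₀)^2 := by
              apply sq_le_sq' _ h1
              linarith [norm_nonneg (deriv γ t - u), abs_nonneg (t - s/2),
                div_nonneg (abs_nonneg (t - s/2)) hr₀.le]
          _ = (t - s/2)^2 / r₀^2 := by rw [div_pow, sq_abs]
      have h4 : (t - s/2)^2 / (2 * r₀^2) = ((t - s/2)^2 / r₀^2) / 2 := by ring
      linarith
    have hIntLHS : IntervalIntegrable (fun t => 1 - (t - s/2)^2 / (2 * r₀^2))
        MeasureTheory.volume 0 s := by
      apply Continuous.intervalIntegrable; fun_prop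
    have hIntRHS : IntervalIntegrable (fun t => ⟪u, deriv γ t⟫)
        MeasureTheory.volume 0 s := by
      apply Continuous.intervalIntegrable
      exact (continuous_const.inner hcont')
    have hmono : ∫ t in (0:ℝ)..s, (1 - (t - s/2)^2 / (2 * r₀^2)) ≤
        ∫ t in (0:ℝ)..s, ⟪u, deriv γ t⟫ :=
      integral_mono_on hs hIntLHS hIntRHS (fun t _ => hptwise t)
    have hcomp : ∫ t in (0:ℝ)..s, (1 - (t - s/2)^2 / (2 * r₀^2)) =
        s - s^3 / (24 * r₀^2) := by
      have hr2 : (2 * r₀^2) ≠ 0 := by positivity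
      have : ∀ t : ℝ, 1 - (t - s/2)^2 / (2 * r₀^2) =
          1 - (1/(2*r₀^2)) * t^2 + (s/(2*r₀^2)) * t - (s^2/(8*r₀^2)) := by
        intro t; field_simp; ring
      simp_rw [this]
      have I2 : ∫ t in (0:ℝ)..s, t^2 = s^3/3 := by
        rw [integral_pow]; norm_num
      have I3 : ∫ t in (0:ℝ)..s, t = s^2/2 := by
        rw [integral_id]; ring
      rw [integral_sub, integral_add, integral_sub, integral_const_mul,
        integral_const_mul, I2, I3, integral_const, integral_const]
      · field_simp
        have hr : r₀ ^ 2 * r₀⁻¹ ^ 2 = 1 := by rw [← mul_pow, mul_inv_cancel₀ hr₀.ne', one_pow]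
        linear_combination (-36 * s ^ 3) * hr
      all_goals apply Continuous.intervalIntegrable; fun_prop
    have hcs : ⟪u, γ s - γ 0⟫ ≤ ‖γ s - γ 0‖ := by
      calc ⟪u, γ s - γ 0⟫ ≤ ‖u‖ * ‖γ s - γ 0‖ := real_inner_le_norm _ _
        _ = ‖γ s - γ 0‖ := by rw [hnu, one_mul]
    calc s - s ^ 3 / (24 * r₀ ^ 2)
        = ∫ t in (0:ℝ)..s, (1 - (t - s/2)^2 / (2 * r₀^2)) := hcomp.symm
      _ ≤ ∫ t in (0:ℝ)..s, ⟪u, deriv γ t⟫ := hmono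
      _ = ⟪u, γ s - γ 0⟫ := hinner.symm
      _ ≤ ‖γ s - γ 0‖ := hcs
  · -- upper bound
    have := (convex_univ (𝕜 := ℝ)).norm_image_sub_le_of_norm_deriv_le
      (fun x _ => hdγ x) (fun x _ => (hunit x).le) (trivial) (trivial) (s := Set.univ)
      (x := 0) (y := s)
    simpa [abs_of_nonneg hs] using this
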